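/- Let Ω be an open subset of X. Let φ ∈ D(E_D) and ψ ∈ D(E) with ψ ≥ 0, and suppose that (χ,φ) + E_D(χ,φ) ≤ (χ,ψ) + E(χ,ψ) for all χ ∈ D(E_D) with χ ≥ 0. Then φ ≤ ψ almost everywhere. -/

import Mathlib

open MeasureTheory Filter Topology Set ENNReal
open scoped ENNReal

namespace DirichletPaper

variable {X : Type*} [MeasurableSpace X]

/-- The unit cut-off `0 ∨ φ ∧ 1`. -/
def cut (φ : X → ℝ) : X → ℝ := fun x => max 0 (min (φ x) 1)

/-- A symmetric Dirichlet form on `L₂(X, μ)`, modelled on genuine functions with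
all identifications made almost everywhere. -/
structure DirichletForm (μ : Measure X) where
  dom : Set (X → ℝ)
  form : (X → ℝ) → (X → ℝ) → ℝ
  dom_memLp : ∀ φ ∈ dom, MemLp φ 2 μ
  zero_mem : (0 : X → ℝ) ∈ dom
  add_mem : ∀ φ ∈ dom, ∀ ψ ∈ dom, φ + ψ ∈ dom
  smul_mem : ∀ (c : ℝ), ∀ φ ∈ dom, c • φ ∈ dom
  mul_mem : ∀ φ ∈ dom, ∀ ψ ∈ dom, (∃ C, ∀ᵐ x ∂μ, |φ x| ≤ C) →
    (∃ C, ∀ᵐ x ∂μ, |ψ x| ≤ C) → φ * ψ ∈ dom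
  congr_mem : ∀ φ ∈ dom, ∀ ψ : X → ℝ, ψ =ᵐ[μ] φ → ψ ∈ dom
  congr_form : ∀ φ ∈ dom, ∀ ψ ∈ dom, ∀ φ' ∈ dom, ∀ ψ' ∈ dom, φ' =ᵐ[μ] φ → ψ' =ᵐ[μ] ψ →
    form φ' ψ' = form φ ψ
  symm : ∀ φ ψ, form φ ψ = form ψ φ
  add_left : ∀ φ ∈ dom, ∀ ψ ∈ dom, ∀ χ ∈ dom, form (φ + ψ) χ = form φ χ + form ψ χ
  smul_left : ∀ (c : ℝ), ∀ φ ∈ dom, ∀ ψ ∈ dom, form (c • φ) ψ = c * form φ ψ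
  nonneg : ∀ φ ∈ dom, 0 ≤ form φ φ
  closed : ∀ (f : ℕ → X → ℝ) (φ : X → ℝ), (∀ n, f n ∈ dom) → MemLp φ 2 μ →
    Tendsto (fun n => eLpNorm (f n - φ) 2 μ) atTop (𝓝 0) →
    (∀ ε > 0, ∃ N, ∀ m ≥ N, ∀ n ≥ N, form (f m - f n) (f m - f n) < ε) →
    φ ∈ dom ∧ Tendsto (fun n => form (f n - φ) (f n - φ)) atTop (𝓝 0)
  markov : ∀ φ ∈ dom, cut φ ∈ dom ∧ form (cut φ) (cut φ) ≤ form φ φ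

variable {μ : Measure X}

/-- The quadratic form associated with a Dirichlet form. -/
def DirichletForm.q (E : DirichletForm μ) : (X → ℝ) → ℝ := fun φ => E.form φ φ

/-- Locality: `E(ψ,φ) = 0` whenever `φ ψ = 0`. -/
def IsLocal (E : DirichletForm μ) : Prop :=
  ∀ φ ∈ E.dom, ∀ ψ ∈ E.dom, (∀ᵐ x ∂μ, φ x * ψ x = 0) → E.form ψ φ = 0

/-- Strong locality: `E(φ,ψ) = 0` whenever `(φ + a 1) ψ = 0`. -/
def IsStronglyLocal (E : DirichletForm μ) : Prop :=
  ∀ φ ∈ E.dom, ∀ ψ ∈ E.dom, ∀ a : ℝ, (∀ᵐ x ∂μ, (φ x + a) * ψ x = 0) → E.form φ ψ = 0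

/-- `D(E) ∩ C_c(X)` is dense in `C₀(X)` for the supremum norm. -/
def DenseInC0 [TopologicalSpace X] (E : DirichletForm μ) : Prop :=
  ∀ g : X → ℝ, Continuous g → Tendsto g (cocompact X) (𝓝 0) → ∀ ε > 0,
    ∃ φ ∈ E.dom, Continuous φ ∧ HasCompactSupport φ ∧ ∀ x, |φ x - g x| < ε

/-- Regularity: `D(E) ∩ C_c(X)` is dense in `C₀(X)` (sup norm) and in `D(E)` (graph norm). -/
def IsRegular [TopologicalSpace X] (E : DirichletForm μ) : Prop :=
  DenseInC0 E ∧ ∀ φ ∈ E.dom, ∀ ε > 0, ∃ ψ ∈ E.dom, Continuous ψ ∧ HasCompactSupport ψ ∧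
    (∫ x, (φ x - ψ x) ^ 2 ∂μ) + E.form (φ - ψ) (φ - ψ) < ε

/-- The squared graph norm `‖φ‖₂² + q(φ)` of a quadratic form `q`. -/
noncomputable def graphNormSq (μ : Measure X) (q : (X → ℝ) → ℝ) (φ : X → ℝ) : ℝ :=
  (∫ x, φ x ^ 2 ∂μ) + q φ

/-- `D_Ω`: the elements of the domain whose support is a compact subset of `Ω`. -/
def DOmegaGen [TopologicalSpace X] (dom : Set (X → ℝ)) (Ω : Set X) : Set (X → ℝ) :=
  {φ ∈ dom | IsCompact (tsupport φ) ∧ tsupport φ ⊆ Ω}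

/-- `D(E_D)`: the closure of `D_Ω` with respect to the graph norm. -/
def domDGen [TopologicalSpace X] (μ : Measure X) (dom : Set (X → ℝ)) (q : (X → ℝ) → ℝ)
    (Ω : Set X) : Set (X → ℝ) :=
  {φ ∈ dom | ∃ f : ℕ → X → ℝ, (∀ n, f n ∈ DOmegaGen dom Ω) ∧
    Tendsto (fun n => graphNormSq μ q (f n - φ)) atTop (𝓝 0)}

/-- The domain of the Dirichlet restriction `E_D` of `E` to an open set `Ω`. -/
def DirichletForm.domD [TopologicalSpace X] (E : DirichletForm μ) (Ω : Set X) :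
    Set (X → ℝ) :=
  domDGen μ E.dom E.q Ω

/-- The relative capacity `cap_Ω(A)` of `A ⊆ closure Ω` with respect to a form
with domain `dom` and quadratic part `q`. -/
noncomputable def relCap [TopologicalSpace X] (μ : Measure X) (dom : Set (X → ℝ))
    (q : (X → ℝ) → ℝ) (Ω A : Set X) : ℝ≥0∞ :=
  sInf {r : ℝ≥0∞ | ∃ φ ∈ dom, ∃ V : Set X, IsOpen V ∧ A ⊆ V ∧
    (∀ᵐ x ∂μ, x ∈ V ∩ Ω → 1 ≤ φ x) ∧ r = ENNReal.ofReal (graphNormSq μ q φ)}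

/-- Membership of `L₂(Ω)`, identified with `{1_Ω φ : φ ∈ L₂(X)} ⊆ L₂(X)`. -/
def MemL2 (μ : Measure X) (Ω : Set X) (φ : X → ℝ) : Prop :=
  MemLp φ 2 μ ∧ φ =ᵐ[μ] Ω.indicator φ

/-- A semigroup on `L₂(Y)` (extended to `L₂(X)` by `S_t φ = S_t (1_Y φ)`) is conservative
if `S_t 1_Y = 1_Y` for all `t > 0`. -/
def ConservativeOn (μ : Measure X) (Y : Set X) (S : ℝ → (X → ℝ) → (X → ℝ)) : Prop :=
  ∀ t > 0, S t (Y.indicator fun _ => (1 : ℝ)) =ᵐ[μ] Y.indicator fun _ => (1 : ℝ)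

/-- `S` is the submarkovian semigroup on `L₂(Y)`, extended to `L₂(X)` by
`S_t φ = S_t (1_Y φ)`, associated with the (Dirichlet) form with domain `dom` and
quadratic part `q`; the association is expressed by the standard characterisation
`q(φ) = lim_{t ↓ 0} t⁻¹ (φ, (I - S_t) φ)` with domain the set where the quotients
stay bounded.  The extension of `S` to `L_∞` is pinned down by monotone continuity. -/
structure IsSubmarkovSemigroupOn (μ : Measure X) (Y : Set X) (dom : Set (X → ℝ))
    (q : (X → ℝ) → ℝ) (S : ℝ → (X → ℝ) → (X → ℝ)) : Prop where
  proj : ∀ t > 0, ∀ φ : X → ℝ, S t φ =ᵐ[μ] S t (Y.indicator φ)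
  supported : ∀ t > 0, ∀ φ : X → ℝ, MemLp φ 2 μ → S t φ =ᵐ[μ] Y.indicator (S t φ)
  memLp : ∀ t > 0, ∀ φ : X → ℝ, MemLp φ 2 μ → MemLp (S t φ) 2 μ
  map_add : ∀ t > 0, ∀ φ ψ : X → ℝ, MemLp φ 2 μ → MemLp ψ 2 μ →
    S t (φ + ψ) =ᵐ[μ] S t φ + S t ψ
  map_smul : ∀ t > 0, ∀ (c : ℝ), ∀ φ : X → ℝ, MemLp φ 2 μ → S t (c • φ) =ᵐ[μ] c • S t φ
  semigroup : ∀ s > 0, ∀ t > 0, ∀ φ : X → ℝ, MemLp φ 2 μ →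
    S (s + t) φ =ᵐ[μ] S s (S t φ)
  symmetric : ∀ t > 0, ∀ φ ψ : X → ℝ, MemLp φ 2 μ → MemLp ψ 2 μ →
    ∫ x, S t φ x * ψ x ∂μ = ∫ x, φ x * S t ψ x ∂μ
  contraction : ∀ t > 0, ∀ φ : X → ℝ, MemLp φ 2 μ → eLpNorm (S t φ) 2 μ ≤ eLpNorm φ 2 μ
  submarkov : ∀ t > 0, ∀ φ : X → ℝ, (∀ᵐ x ∂μ, 0 ≤ φ x ∧ φ x ≤ 1) →
    ∀ᵐ x ∂μ, 0 ≤ S t φ x ∧ S t φ x ≤ 1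
  mono : ∀ t > 0, ∀ φ ψ : X → ℝ, φ ≤ᵐ[μ] ψ → S t φ ≤ᵐ[μ] S t ψ
  mono_cont : ∀ t > 0, ∀ (f : ℕ → X → ℝ) (φ : X → ℝ), (∀ n, f n ≤ᵐ[μ] f (n + 1)) →
    (∀ᵐ x ∂μ, Tendsto (fun n => f n x) atTop (𝓝 (φ x))) →
    ∀ᵐ x ∂μ, Tendsto (fun n => S t (f n) x) atTop (𝓝 (S t φ x))
  strong_cont : ∀ φ : X → ℝ, MemLp φ 2 μ →
    Tendsto (fun t => eLpNorm (S t φ - Y.indicator φ) 2 μ) (𝓝[>] 0) (𝓝 0)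
  mem_dom_iff : ∀ φ : X → ℝ, MemLp φ 2 μ → φ =ᵐ[μ] Y.indicator φ →
    ((∃ ψ ∈ dom, φ =ᵐ[μ] ψ) ↔
      BddAbove {r : ℝ | ∃ t > 0, r = t⁻¹ * ∫ x, φ x * (φ x - S t φ x) ∂μ})
  form_eq : ∀ φ ∈ dom, Tendsto (fun t : ℝ => t⁻¹ * ∫ x, φ x * (φ x - S t φ x) ∂μ)
    (𝓝[>] 0) (𝓝 (q φ))

/-- The truncated form `E_χ(φ) = E(χ φ, φ) - 2⁻¹ E(χ, φ²)` on `D(E) ∩ L_∞`. -/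
noncomputable def trunc (E : DirichletForm μ) (χ φ : X → ℝ) : ℝ :=
  E.form (χ * φ) φ - 2⁻¹ * E.form χ (φ * φ)

/-- The bounded truncations of `φ` used to extend `E_χ` by continuity to `D(E)`. -/
noncomputable def truncClip (E : DirichletForm μ) (χ φ : X → ℝ) (m : ℕ) : ℝ :=
  trunc E χ (fun x => max (-(m : ℝ)) (min (φ x) (m : ℝ)))

/-- The extension by continuity of the truncated form `E_χ` to all of `D(E)`. -/
noncomputable def truncExt (E : DirichletForm μ) (χ φ : X → ℝ) : ℝ :=
  limUnder atTop (truncClip E χ φ)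

/-- The convex set `C_Ω = {χ ∈ D(E) ∩ L_∞(X) : 0 ≤ χ ≤ 1_Ω}`. -/
def CSet (E : DirichletForm μ) (Ω : Set X) : Set (X → ℝ) :=
  {χ ∈ E.dom | ∀ᵐ x ∂μ, 0 ≤ χ x ∧ χ x ≤ Ω.indicator (fun _ => (1 : ℝ)) x}

/-- The Neumann form `E_N(φ) = sup {E_χ(φ) : χ ∈ C_Ω}` with domain `D(E)`. -/
noncomputable def neumann (E : DirichletForm μ) (Ω : Set X) (φ : X → ℝ) : ℝ :=
  sSup {r : ℝ | ∃ χ ∈ CSet E Ω, r = truncExt E χ φ}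

/-- The relaxation (lower semicontinuous regularisation) of the quadratic form `q`
with domain `dom`, as an `ℝ≥0∞`-valued function on `L₂`. -/
noncomputable def relaxVal (μ : Measure X) (dom : Set (X → ℝ)) (q : (X → ℝ) → ℝ)
    (φ : X → ℝ) : ℝ≥0∞ :=
  ⨅ (f : ℕ → X → ℝ) (_ : ∀ n, f n ∈ dom)
    (_ : Tendsto (fun n => eLpNorm (f n - φ) 2 μ) atTop (𝓝 0)),
    atTop.liminf fun n => ENNReal.ofReal (q (f n))

/-- The domain of the relaxation of `(dom, q)`. -/
def relaxDom (μ : Measure X) (dom : Set (X → ℝ)) (q : (X → ℝ) → ℝ) : Set (X → ℝ) :=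
  {φ | MemLp φ 2 μ ∧ relaxVal μ dom q φ ≠ ⊤}

/-- The quadratic form of the relaxation of `(dom, q)`. -/
noncomputable def relaxQ (μ : Measure X) (dom : Set (X → ℝ)) (q : (X → ℝ) → ℝ)
    (φ : X → ℝ) : ℝ :=
  (relaxVal μ dom q φ).toReal

/-- Closedness of a quadratic form `q` with domain `dom` on `L₂(X, μ)`. -/
def IsClosedForm (μ : Measure X) (dom : Set (X → ℝ)) (q : (X → ℝ) → ℝ) : Prop :=
  ∀ (f : ℕ → X → ℝ) (φ : X → ℝ), (∀ n, f n ∈ dom) → MemLp φ 2 μ →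
    Tendsto (fun n => eLpNorm (f n - φ) 2 μ) atTop (𝓝 0) →
    (∀ ε > 0, ∃ N, ∀ m ≥ N, ∀ n ≥ N, q (f m - f n) < ε) →
    φ ∈ dom ∧ Tendsto (fun n => q (f n - φ)) atTop (𝓝 0)


section AuxLemmas

variable {μ : Measure X}

/-- Discriminant argument: a quadratic that is everywhere nonnegative has
nonpositive discriminant. -/
lemma discrim_aux {A B C : ℝ} (h : ∀ t : ℝ, 0 ≤ A + 2 * t * B + t ^ 2 * C) :
    B ^ 2 ≤ A * C := by
  have hA : 0 ≤ A := by simpa using h 0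
  have hC : 0 ≤ C := by
    by_contra hC
    push_neg at hC
    have hCpos : 0 < -C := by linarith
    obtain ⟨t, ht1, hmul⟩ : ∃ t : ℝ, 1 ≤ t ∧ A + 2 * |B| + 1 ≤ t * (-C) := by
      refine ⟨(A + 2 * |B| + 1) / (-C) + 1, ?_, ?_⟩
      · have : 0 ≤ (A + 2 * |B| + 1) / (-C) := div_nonneg (by positivity) hCpos.le
        linarith
      · have e : (A + 2 * |B| + 1) / (-C) * (-C) = A + 2 * |B| + 1 :=
          div_mul_cancel₀ _ hCpos.ne'
        have e2 : ((A + 2 * |B| + 1) / (-C) + 1) * (-C) = A + 2 * |B| + 1 + (-C) := by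
          rw [add_mul, e, one_mul]
        rw [e2]
        linarith
    have ht0 : 0 < t := lt_of_lt_of_le one_pos ht1
    have key := h t
    have h3 : t * (A + 2 * |B| + 1) ≤ t * (t * (-C)) :=
      mul_le_mul_of_nonneg_left hmul ht0.le
    have h4 : 2 * t * B ≤ 2 * t * |B| := by nlinarith [le_abs_self B]
    nlinarith [key, h3, h4, ht1, hA]
  rcases eq_or_lt_of_le hC with hC0 | hC0
  · have hB0 : B = 0 := by
      by_contra hB
      have key := h (-(A + 1) / (2 * B))
      rw [← hC0] at key
      have e2 : 2 * (-(A + 1) / (2 * B)) * B = -(A + 1) := by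
        field_simp
      rw [e2] at key
      nlinarith
    rw [hB0, ← hC0]
    norm_num
  · have key := h (-B / C)
    have e : A + 2 * (-B / C) * B + (-B / C) ^ 2 * C = A - B ^ 2 / C := by
      field_simp
      ring
    rw [e] at key
    have : B ^ 2 / C ≤ A := by linarith
    exact (div_le_iff₀ hC0).mp this

/-- The unit cut-off function is unchanged by moving towards the original point. -/
lemma cut_interp (t a : ℝ) (h0 : 0 ≤ t) :
    max 0 (min (max 0 (min a 1) + t * (a - max 0 (min a 1))) 1) = max 0 (min a 1) := by
  rcases le_total a 0 with h | h
  · rw [min_eq_left (h.trans zero_le_one), max_eq_left h]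
    have hta : t * a ≤ 0 := mul_nonpos_iff.mpr (Or.inl ⟨h0, h⟩)
    rw [zero_add, sub_zero, min_eq_left (hta.trans zero_le_one), max_eq_left hta]
  · rcases le_total a 1 with h1 | h1
    · rw [min_eq_left h1, max_eq_right h, sub_self, mul_zero, add_zero,
        min_eq_left h1, max_eq_right h]
    · rw [min_eq_right h1, max_eq_right zero_le_one]
      have h2 : (1 : ℝ) ≤ 1 + t * (a - 1) := by nlinarith
      rw [min_eq_right h2, max_eq_right zero_le_one]

/-- The unit cut-off is a normal contraction. -/
lemma cut_lipschitz (a b : ℝ) : |max 0 (min a 1) - max 0 (min b 1)| ≤ |a - b| := by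
  have h1 : |max 0 (min a 1) - max 0 (min b 1)| ≤ |min a 1 - min b 1| := by
    rw [max_comm 0 (min a 1), max_comm 0 (min b 1)]
    exact abs_max_sub_max_le_abs _ _ _
  refine h1.trans ?_
  have := abs_min_sub_min_le_max a 1 b 1
  simpa using this

/-- Product of two `L²` functions is integrable. -/
lemma integrable_mul2 {f g : X → ℝ} (hf : MemLp f 2 μ) (hg : MemLp g 2 μ) :
    Integrable (fun x => f x * g x) μ := by
  have hbound : Integrable (fun x => f x ^ 2 + g x ^ 2) μ :=
    hf.integrable_sq.add hg.integrable_sq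
  refine hbound.mono' (hf.aestronglyMeasurable.mul hg.aestronglyMeasurable)
    (Eventually.of_forall fun x => ?_)
  rw [Real.norm_eq_abs]
  refine abs_le.mpr ⟨?_, ?_⟩
  · nlinarith [sq_nonneg (f x + g x), sq_nonneg (f x), sq_nonneg (g x)]
  · nlinarith [sq_nonneg (f x - g x), sq_nonneg (f x), sq_nonneg (g x)]

/-- Cauchy–Schwarz for the `L²` inner product. -/
lemma integral_cs {f g : X → ℝ} (hf : MemLp f 2 μ) (hg : MemLp g 2 μ) :
    (∫ x, f x * g x ∂μ) ^ 2 ≤ (∫ x, f x ^ 2 ∂μ) * ∫ x, g x ^ 2 ∂μ := by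
  apply discrim_aux
  intro t
  have h1 : Integrable (fun x => (2 * t) * (f x * g x)) μ :=
    (integrable_mul2 hf hg).const_mul _
  have h2 : Integrable (fun x => t ^ 2 * g x ^ 2) μ := hg.integrable_sq.const_mul _
  have h3 : Integrable (fun x => (2 * t) * (f x * g x) + t ^ 2 * g x ^ 2) μ := h1.add h2
  have e : ∫ x, (f x + t * g x) ^ 2 ∂μ
      = (∫ x, f x ^ 2 ∂μ) + (2 * t * ∫ x, f x * g x ∂μ + t ^ 2 * ∫ x, g x ^ 2 ∂μ) := by
    rw [← integral_const_mul (2 * t), ← integral_const_mul (t ^ 2), ← integral_add h1 h2,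
      ← integral_add hf.integrable_sq h3]
    refine integral_congr_ae (Eventually.of_forall fun x => ?_)
    dsimp only
    ring
  have hnn : 0 ≤ ∫ x, (f x + t * g x) ^ 2 ∂μ := integral_nonneg fun x => sq_nonneg _
  rw [e] at hnn
  linarith

lemma integral_mul_le_sqrt {f g : X → ℝ} (hf : MemLp f 2 μ) (hg : MemLp g 2 μ) :
    ∫ x, f x * g x ∂μ ≤ Real.sqrt ((∫ x, f x ^ 2 ∂μ) * ∫ x, g x ^ 2 ∂μ) := by
  have h := Real.sqrt_le_sqrt (integral_cs hf hg)
  rw [Real.sqrt_sq_eq_abs] at h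
  exact (le_abs_self _).trans h

namespace DirichletForm

lemma q_def' (E : DirichletForm μ) (a : X → ℝ) : E.q a = E.form a a := rfl

lemma neg_mem (E : DirichletForm μ) {a : X → ℝ} (ha : a ∈ E.dom) : -a ∈ E.dom := by
  have := E.smul_mem (-1) a ha
  rwa [neg_one_smul] at this

lemma sub_mem' (E : DirichletForm μ) {a b : X → ℝ} (ha : a ∈ E.dom) (hb : b ∈ E.dom) :
    a - b ∈ E.dom := by
  rw [sub_eq_add_neg]
  exact E.add_mem a ha _ (E.neg_mem hb)

lemma add_right' (E : DirichletForm μ) {a b c : X → ℝ} (ha : a ∈ E.dom) (hb : b ∈ E.dom)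
    (hc : c ∈ E.dom) : E.form a (b + c) = E.form a b + E.form a c := by
  rw [E.symm a (b + c), E.add_left b hb c hc a ha, E.symm b a, E.symm c a]

lemma smul_right' (E : DirichletForm μ) (t : ℝ) {a b : X → ℝ} (ha : a ∈ E.dom)
    (hb : b ∈ E.dom) : E.form a (t • b) = t * E.form a b := by
  rw [E.symm a (t • b), E.smul_left t b hb a ha, E.symm b a]

lemma sub_right' (E : DirichletForm μ) {a b c : X → ℝ} (ha : a ∈ E.dom) (hb : b ∈ E.dom)
    (hc : c ∈ E.dom) : E.form a (b - c) = E.form a b - E.form a c := by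
  have e : b - c = b + (-1 : ℝ) • c := by rw [neg_one_smul, sub_eq_add_neg]
  rw [e, E.add_right' ha hb (E.smul_mem (-1) c hc), E.smul_right' (-1) ha hc]
  ring

lemma q_add_smul (E : DirichletForm μ) (t : ℝ) {a b : X → ℝ} (ha : a ∈ E.dom)
    (hb : b ∈ E.dom) :
    E.q (a + t • b) = E.q a + 2 * t * E.form a b + t ^ 2 * E.q b := by
  have htb := E.smul_mem t b hb
  have hab := E.add_mem a ha _ htb
  rw [q_def', E.add_left a ha _ htb _ hab, E.add_right' ha ha htb,
    E.smul_left t b hb _ hab, E.add_right' hb ha htb, E.smul_right' t ha hb,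
    E.smul_right' t hb hb, E.symm b a, q_def', q_def']
  ring

lemma form_sq_le (E : DirichletForm μ) {a b : X → ℝ} (ha : a ∈ E.dom) (hb : b ∈ E.dom) :
    (E.form a b) ^ 2 ≤ E.q a * E.q b := by
  apply discrim_aux
  intro t
  rw [← E.q_add_smul t ha hb]
  exact E.nonneg _ (E.add_mem a ha _ (E.smul_mem t b hb))

lemma form_le_sqrt (E : DirichletForm μ) {a b : X → ℝ} (ha : a ∈ E.dom) (hb : b ∈ E.dom) :
    E.form a b ≤ Real.sqrt (E.q a * E.q b) := by
  have h := Real.sqrt_le_sqrt (E.form_sq_le ha hb)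
  rw [Real.sqrt_sq_eq_abs] at h
  exact (le_abs_self _).trans h

lemma abs_form_le_sqrt (E : DirichletForm μ) {a b : X → ℝ} (ha : a ∈ E.dom)
    (hb : b ∈ E.dom) : |E.form a b| ≤ Real.sqrt (E.q a * E.q b) := by
  have h := Real.sqrt_le_sqrt (E.form_sq_le ha hb)
  rwa [Real.sqrt_sq_eq_abs] at h

/-- The key consequence of the Markov property: `E(cut w, w) ≥ 0`. -/
lemma form_cut_self_nonneg (E : DirichletForm μ) {w : X → ℝ} (hw : w ∈ E.dom) :
    0 ≤ E.form (cut w) w := by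
  obtain ⟨hcw, -⟩ := E.markov w hw
  have hd : w - cut w ∈ E.dom := E.sub_mem' hw hcw
  have hqd : 0 ≤ E.form (w - cut w) (w - cut w) := E.nonneg _ hd
  have hstep : ∀ t : ℝ, 0 < t →
      0 ≤ 2 * t * E.form (cut w) (w - cut w) + t ^ 2 * E.form (w - cut w) (w - cut w) := by
    intro t ht0
    have hmem := E.add_mem _ hcw _ (E.smul_mem t _ hd)
    have hcut : cut (cut w + t • (w - cut w)) = cut w := by
      funext x
      simp only [cut, Pi.add_apply, Pi.smul_apply, Pi.sub_apply, smul_eq_mul]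
      exact cut_interp t (w x) ht0.le
    have hm := (E.markov _ hmem).2
    rw [hcut] at hm
    have hq := E.q_add_smul t hcw hd
    simp only [q_def'] at hq
    linarith [hq, hm]
  have hBnn : 0 ≤ E.form (cut w) (w - cut w) := by
    by_contra hB0
    push_neg at hB0
    have hden : (0 : ℝ) < E.form (w - cut w) (w - cut w) + 1 := by linarith
    have ht0 : 0 < -E.form (cut w) (w - cut w) / (E.form (w - cut w) (w - cut w) + 1) :=
      div_pos (by linarith) hden
    have h2 : -E.form (cut w) (w - cut w) / (E.form (w - cut w) (w - cut w) + 1) * E.form (w - cut w) (w - cut w)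
        ≤ -E.form (cut w) (w - cut w) := by
      rw [div_mul_eq_mul_div, div_le_iff₀ hden]
      nlinarith
    have h3 := hstep _ ht0
    nlinarith [h3, h2, ht0, mul_le_mul_of_nonneg_left h2 ht0.le]
  have hsplit : E.form (cut w) (cut w + (w - cut w))
      = E.form (cut w) (cut w) + E.form (cut w) (w - cut w) :=
    E.add_right' hcw hcw hd
  have hww : cut w + (w - cut w) = w := by ring
  rw [hww] at hsplit
  have hq0 : 0 ≤ E.form (cut w) (cut w) := E.nonneg _ hcw
  linarith

end DirichletForm

end AuxLemmas

section Statements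

variable [MetricSpace X] [BorelSpace X] [LocallyCompactSpace X] [SigmaCompactSpace X]
variable {μ : Measure X} [Measure.Regular μ] [Measure.IsOpenPosMeasure μ]

/-- If `φ ∈ D(E_D)` and `0 ≤ ψ ∈ D(E)` satisfy
`(χ,φ) + E_D(χ,φ) ≤ (χ,ψ) + E(χ,ψ)` for all `0 ≤ χ ∈ D(E_D)`, then `φ ≤ ψ`. -/
theorem statement5 (E : DirichletForm μ) (hloc : IsLocal E) (hdense : DenseInC0 E)
    (Ω : Set X) (hΩ : IsOpen Ω) (φ ψ : X → ℝ)
    (hφ : φ ∈ E.domD Ω) (hψ : ψ ∈ E.dom) (hψ0 : (0 : X → ℝ) ≤ᵐ[μ] ψ)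
    (h : ∀ χ ∈ E.domD Ω, (0 : X → ℝ) ≤ᵐ[μ] χ →
      (∫ x, χ x * φ x ∂μ) + E.form χ φ ≤ (∫ x, χ x * ψ x ∂μ) + E.form χ ψ) :
    φ ≤ᵐ[μ] ψ := by
  classical
  obtain ⟨hφdom, g, hgmem, hgconv⟩ := hφ
  set ψ' : X → ℝ := fun x => max (ψ x) 0 with hψ'def
  have hψ'ae : ψ' =ᵐ[μ] ψ := by
    filter_upwards [hψ0] with x hx
    simp only [Pi.zero_apply] at hx
    exact max_eq_left hx
  have hψ'mem : ψ' ∈ E.dom := E.congr_mem ψ hψ ψ' hψ'ae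
  have hψ'2 : MemLp ψ' 2 μ := E.dom_memLp _ hψ'mem
  have hψ'nn : ∀ x, 0 ≤ ψ' x := fun x => le_max_right _ _
  have hgdom : ∀ n, g n ∈ E.dom := fun n => (hgmem n).1
  have hφ2 : MemLp φ 2 μ := E.dom_memLp _ hφdom
  have hddom : ∀ n, g n - φ ∈ E.dom := fun n => E.sub_mem' (hgdom n) hφdom
  have hudom : φ - ψ' ∈ E.dom := E.sub_mem' hφdom hψ'mem
  have hu2 : MemLp (φ - ψ') 2 μ := E.dom_memLp _ hudom
  have hundom : ∀ n, g n - ψ' ∈ E.dom := fun n => E.sub_mem' (hgdom n) hψ'mem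
  have hχdom : ∀ n, cut (g n - ψ') ∈ E.dom := fun n => (E.markov _ (hundom n)).1
  have hχ2 : ∀ n, MemLp (cut (g n - ψ')) 2 μ := fun n => E.dom_memLp _ (hχdom n)
  have hcut_u_dom : cut (φ - ψ') ∈ E.dom := (E.markov _ hudom).1
  have hcu2 : MemLp (cut (φ - ψ')) 2 μ := E.dom_memLp _ hcut_u_dom
  -- convergence of the two components of the graph norm
  simp only [graphNormSq] at hgconv
  have hQnn : ∀ n, 0 ≤ E.q (g n - φ) := fun n => E.nonneg _ (hddom n)
  have hInn : ∀ n, 0 ≤ ∫ x, (g n - φ) x ^ 2 ∂μ :=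
    fun n => integral_nonneg fun x => sq_nonneg _
  have hI0 : Tendsto (fun n => ∫ x, (g n - φ) x ^ 2 ∂μ) atTop (𝓝 0) :=
    squeeze_zero hInn (fun n => le_add_of_nonneg_right (hQnn n)) hgconv
  have hQ0 : Tendsto (fun n => E.q (g n - φ)) atTop (𝓝 0) :=
    squeeze_zero hQnn (fun n => le_add_of_nonneg_left (hInn n)) hgconv
  have hFud : Tendsto (fun n => E.form (φ - ψ') (g n - φ)) atTop (𝓝 0) := by
    apply squeeze_zero_norm (a := fun n => Real.sqrt (E.q (φ - ψ') * E.q (g n - φ)))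
    · intro n
      rw [Real.norm_eq_abs]
      exact E.abs_form_le_sqrt hudom (hddom n)
    · have h1 : Tendsto (fun n => E.q (φ - ψ') * E.q (g n - φ)) atTop
          (𝓝 (E.q (φ - ψ') * 0)) := hQ0.const_mul _
      rw [mul_zero] at h1
      have h2 := (Real.continuous_sqrt.tendsto 0).comp h1
      simpa [Function.comp_def, Real.sqrt_zero] using h2
  have hqun_eq : ∀ n, E.q (g n - ψ')
      = E.q (φ - ψ') + 2 * E.form (φ - ψ') (g n - φ) + E.q (g n - φ) := by
    intro n
    have e : g n - ψ' = (φ - ψ') + (1 : ℝ) • (g n - φ) := by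
      funext x
      simp only [Pi.add_apply, Pi.sub_apply, Pi.smul_apply, smul_eq_mul]
      ring
    rw [e, E.q_add_smul 1 hudom (hddom n)]
    ring
  have hqun0 : Tendsto (fun n => E.q (g n - ψ')) atTop (𝓝 (E.q (φ - ψ'))) := by
    have h1 : Tendsto
        (fun n => E.q (φ - ψ') + 2 * E.form (φ - ψ') (g n - φ) + E.q (g n - φ))
        atTop (𝓝 (E.q (φ - ψ') + 2 * 0 + 0)) :=
      (tendsto_const_nhds.add (hFud.const_mul 2)).add hQ0
    simp only [mul_zero, add_zero] at h1
    simpa only [hqun_eq] using h1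
  -- the test functions are admissible
  have hχmemD : ∀ n, cut (g n - ψ') ∈ E.domD Ω := by
    intro n
    obtain ⟨-, hgc, hgΩ⟩ := hgmem n
    have hsupp : Function.support (cut (g n - ψ')) ⊆ Function.support (g n) := by
      intro x hx
      simp only [Function.mem_support] at hx ⊢
      intro hgx
      apply hx
      have h1 : min ((g n - ψ') x) 1 ≤ 0 := by
        refine le_trans (min_le_left _ _) ?_
        simp only [Pi.sub_apply, hgx, zero_sub]
        exact neg_nonpos.mpr (hψ'nn x)
      simp only [cut]
      exact max_eq_left h1
    have hts : tsupport (cut (g n - ψ')) ⊆ tsupport (g n) := closure_mono hsupp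
    refine ⟨hχdom n, fun _ => cut (g n - ψ'),
      fun k => ⟨hχdom n, hgc.of_isClosed_subset (isClosed_tsupport _) hts,
        hts.trans hgΩ⟩, ?_⟩
    have hzero : cut (g n - ψ') - cut (g n - ψ') = (0 : X → ℝ) := sub_self _
    have hq0 : E.q (0 : X → ℝ) = 0 := by
      have h1 : E.form ((0 : ℝ) • (0 : X → ℝ)) (0 : X → ℝ) = 0 * E.form 0 0 :=
        E.smul_left 0 _ E.zero_mem _ E.zero_mem
      rw [zero_smul, zero_mul] at h1
      exact h1
    have hiz : (∫ x, (0 : X → ℝ) x ^ 2 ∂μ) = 0 := by simp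
    simp only [hzero, graphNormSq, hq0, hiz, add_zero]
    exact tendsto_const_nhds
  -- the key estimate for each n
  have hkey : ∀ n, (∫ x, cut (φ - ψ') x * (φ - ψ') x ∂μ)
      ≤ Real.sqrt (E.q (g n - ψ') * E.q (g n - φ))
        + Real.sqrt ((∫ x, (g n - φ) x ^ 2 ∂μ) * ∫ x, (φ - ψ') x ^ 2 ∂μ) := by
    intro n
    have hχ0 : (0 : X → ℝ) ≤ᵐ[μ] cut (g n - ψ') :=
      Eventually.of_forall fun x => by
        simp only [Pi.zero_apply, cut]
        exact le_max_left _ _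
    have hh := h _ (hχmemD n) hχ0
    have hintφ : Integrable (fun x => cut (g n - ψ') x * φ x) μ :=
      integrable_mul2 (hχ2 n) hφ2
    have hintψ' : Integrable (fun x => cut (g n - ψ') x * ψ' x) μ :=
      integrable_mul2 (hχ2 n) hψ'2
    have hiψ : ∫ x, cut (g n - ψ') x * ψ x ∂μ = ∫ x, cut (g n - ψ') x * ψ' x ∂μ := by
      refine integral_congr_ae ?_
      filter_upwards [hψ'ae] with x hx
      rw [hx]
    have hfψ : E.form (cut (g n - ψ')) ψ = E.form (cut (g n - ψ')) ψ' :=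
      E.congr_form (cut (g n - ψ')) (hχdom n) ψ' hψ'mem (cut (g n - ψ')) (hχdom n) ψ hψ
        EventuallyEq.rfl hψ'ae.symm
    have hiu : ∫ x, cut (g n - ψ') x * (φ - ψ') x ∂μ
        = (∫ x, cut (g n - ψ') x * φ x ∂μ) - ∫ x, cut (g n - ψ') x * ψ' x ∂μ := by
      rw [← integral_sub hintφ hintψ']
      refine integral_congr_ae (Eventually.of_forall fun x => ?_)
      simp only [Pi.sub_apply]
      ring
    have hfu : E.form (cut (g n - ψ')) (φ - ψ')
        = E.form (cut (g n - ψ')) φ - E.form (cut (g n - ψ')) ψ' :=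
      E.sub_right' (hχdom n) hφdom hψ'mem
    have hsplitu : φ - ψ' = (g n - ψ') - (g n - φ) := by
      funext x
      simp only [Pi.sub_apply]
      ring
    have hfu2 : E.form (cut (g n - ψ')) (φ - ψ')
        = E.form (cut (g n - ψ')) (g n - ψ') - E.form (cut (g n - ψ')) (g n - φ) := by
      conv_lhs => rw [hsplitu]
      exact E.sub_right' (hχdom n) (hundom n) (hddom n)
    have hpos : 0 ≤ E.form (cut (g n - ψ')) (g n - ψ') :=
      E.form_cut_self_nonneg (hundom n)
    have hmain1 : ∫ x, cut (g n - ψ') x * (φ - ψ') x ∂μ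
        ≤ E.form (cut (g n - ψ')) (g n - φ) := by
      rw [hiψ, hfψ] at hh
      linarith [hh, hiu, hfu, hfu2, hpos]
    have hcs : E.form (cut (g n - ψ')) (g n - φ)
        ≤ Real.sqrt (E.q (g n - ψ') * E.q (g n - φ)) := by
      refine (E.form_le_sqrt (hχdom n) (hddom n)).trans (Real.sqrt_le_sqrt ?_)
      exact mul_le_mul_of_nonneg_right (E.markov _ (hundom n)).2 (hQnn n)
    have hdiff2 : MemLp (fun x => cut (φ - ψ') x - cut (g n - ψ') x) 2 μ :=
      hcu2.sub (hχ2 n)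
    have hsq_le : ∀ x, (cut (φ - ψ') x - cut (g n - ψ') x) ^ 2 ≤ (g n - φ) x ^ 2 := by
      intro x
      have hl : |cut (φ - ψ') x - cut (g n - ψ') x| ≤ |(φ - ψ') x - (g n - ψ') x| :=
        cut_lipschitz _ _
      have he : (φ - ψ') x - (g n - ψ') x = -((g n - φ) x) := by
        simp only [Pi.sub_apply]
        ring
      rw [he, abs_neg] at hl
      calc (cut (φ - ψ') x - cut (g n - ψ') x) ^ 2
          = |cut (φ - ψ') x - cut (g n - ψ') x| ^ 2 := (sq_abs _).symm
        _ ≤ |(g n - φ) x| ^ 2 := pow_le_pow_left₀ (abs_nonneg _) hl 2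
        _ = (g n - φ) x ^ 2 := sq_abs _
    have hsqd_int : Integrable (fun x => (g n - φ) x ^ 2) μ :=
      (E.dom_memLp _ (hddom n)).integrable_sq
    have hsqdiff_int : Integrable (fun x => (cut (φ - ψ') x - cut (g n - ψ') x) ^ 2) μ :=
      hdiff2.integrable_sq
    have hIA : (∫ x, (cut (φ - ψ') x - cut (g n - ψ') x) ^ 2 ∂μ)
        ≤ ∫ x, (g n - φ) x ^ 2 ∂μ :=
      integral_mono hsqdiff_int hsqd_int hsq_le
    have hT2 : ∫ x, (cut (φ - ψ') x - cut (g n - ψ') x) * (φ - ψ') x ∂μ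
        ≤ Real.sqrt ((∫ x, (g n - φ) x ^ 2 ∂μ) * ∫ x, (φ - ψ') x ^ 2 ∂μ) := by
      refine (integral_mul_le_sqrt hdiff2 hu2).trans (Real.sqrt_le_sqrt ?_)
      exact mul_le_mul_of_nonneg_right hIA (integral_nonneg fun x => sq_nonneg _)
    have hTsplit : ∫ x, cut (φ - ψ') x * (φ - ψ') x ∂μ
        = (∫ x, cut (g n - ψ') x * (φ - ψ') x ∂μ)
          + ∫ x, (cut (φ - ψ') x - cut (g n - ψ') x) * (φ - ψ') x ∂μ := by
      rw [← integral_add (integrable_mul2 (hχ2 n) hu2) (integrable_mul2 hdiff2 hu2)]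
      refine integral_congr_ae (Eventually.of_forall fun x => ?_)
      dsimp only
      ring
    linarith [hmain1, hcs, hT2, hTsplit]
  -- pass to the limit
  have hBnd : Tendsto (fun n => Real.sqrt (E.q (g n - ψ') * E.q (g n - φ))
      + Real.sqrt ((∫ x, (g n - φ) x ^ 2 ∂μ) * ∫ x, (φ - ψ') x ^ 2 ∂μ)) atTop (𝓝 0) := by
    have h1 : Tendsto (fun n => E.q (g n - ψ') * E.q (g n - φ)) atTop
        (𝓝 (E.q (φ - ψ') * 0)) := hqun0.mul hQ0
    rw [mul_zero] at h1
    have h1' := (Real.continuous_sqrt.tendsto 0).comp h1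
    have h2 : Tendsto (fun n => (∫ x, (g n - φ) x ^ 2 ∂μ) * ∫ x, (φ - ψ') x ^ 2 ∂μ)
        atTop (𝓝 (0 * ∫ x, (φ - ψ') x ^ 2 ∂μ)) := hI0.mul_const _
    rw [zero_mul] at h2
    have h2' := (Real.continuous_sqrt.tendsto 0).comp h2
    have h3 := h1'.add h2'
    simpa [Function.comp, Real.sqrt_zero] using h3
  have hT0 : (∫ x, cut (φ - ψ') x * (φ - ψ') x ∂μ) ≤ 0 :=
    ge_of_tendsto hBnd (Eventually.of_forall hkey)
  have hTnn0 : ∀ x, 0 ≤ cut (φ - ψ') x * (φ - ψ') x := by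
    intro x
    rcases le_or_gt ((φ - ψ') x) 0 with hx | hx
    · have h1 : min ((φ - ψ') x) 1 ≤ 0 := le_trans (min_le_left _ _) hx
      have h2 : cut (φ - ψ') x = 0 := max_eq_left h1
      rw [h2, zero_mul]
    · exact mul_nonneg (le_max_left _ _) hx.le
  have hTint : Integrable (fun x => cut (φ - ψ') x * (φ - ψ') x) μ :=
    integrable_mul2 hcu2 hu2
  have hTeq : (∫ x, cut (φ - ψ') x * (φ - ψ') x ∂μ) = 0 :=
    le_antisymm hT0 (integral_nonneg hTnn0)
  have hae : (fun x => cut (φ - ψ') x * (φ - ψ') x) =ᵐ[μ] 0 :=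
    (integral_eq_zero_iff_of_nonneg hTnn0 hTint).mp hTeq
  filter_upwards [hae, hψ'ae] with x hx hx'
  have hx0 : cut (φ - ψ') x * (φ - ψ') x = 0 := by simpa using hx
  have hux : (φ - ψ') x ≤ 0 := by
    by_contra hpos
    push_neg at hpos
    have h1 : 0 < min ((φ - ψ') x) 1 := lt_min hpos one_pos
    have h2 : cut (φ - ψ') x = min ((φ - ψ') x) 1 := max_eq_right h1.le
    rw [h2] at hx0
    exact absurd hx0 (ne_of_gt (mul_pos h1 hpos))
  have h3 : φ x - ψ' x ≤ 0 := by simpa using hux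
  have h4 : ψ' x = ψ x := hx'
  linarith

end Statements

end DirichletPaper
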